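/- Let Ω ⊂ ℝⁿ be a bounded open set. If u, v ∈ 𝒦_s(Ω), then the pointwise maximum max{u, v} also belongs to 𝒦_s(Ω); in particular [max{u,v}]_s < ∞ and 𝓔_s(max{u,v}, φ) ≤ ∫_{ℝⁿ} φ dx for every nonnegative φ ∈ 𝒟_s(Ω). -/

import Mathlib

open MeasureTheory ENNReal Filter Topology

noncomputable section

/-- Euclidean space ℝⁿ. -/
abbrev Rn (n : ℕ) := EuclideanSpace ℝ (Fin n)

/-- The first coordinate of a point of ℝⁿ (junk value `0` when `n = 0`). -/
def firstCoord {n : ℕ} (ζ : Rn n) : ℝ := if h : 0 < n then ζ ⟨0, h⟩ else 0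

/-- The normalization constant `c(n,s)`. -/
def cns (n : ℕ) (s : ℝ) : ℝ :=
  (∫ ζ : Rn n, (1 - Real.cos (firstCoord ζ)) / ‖ζ‖ ^ ((n : ℝ) + 2 * s))⁻¹

/-- The square of the Gagliardo seminorm `[u]_s²`, as an extended nonnegative real. -/
def gagSq (n : ℕ) (s : ℝ) (u : Rn n → ℝ) : ℝ≥0∞ :=
  ∫⁻ p : Rn n × Rn n,
    ENNReal.ofReal ((u p.1 - u p.2) ^ 2 / ‖p.1 - p.2‖ ^ ((n : ℝ) + 2 * s))

/-- The bilinear energy `𝓔_s(u,v)`. -/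
def energy (n : ℕ) (s : ℝ) (u v : Rn n → ℝ) : ℝ :=
  (cns n s / 2) *
    ∫ p : Rn n × Rn n,
      (u p.1 - u p.2) * (v p.1 - v p.2) / ‖p.1 - p.2‖ ^ ((n : ℝ) + 2 * s)

/-- The class `𝒟_s(D)`: `L²` functions with finite Gagliardo seminorm vanishing a.e. outside `D`. -/
def Ds (n : ℕ) (s : ℝ) (D : Set (Rn n)) (w : Rn n → ℝ) : Prop :=
  MemLp w 2 (volume : Measure (Rn n)) ∧ gagSq n s w < ⊤ ∧
    ∀ᵐ x : Rn n, x ∉ D → w x = 0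

/-- The class `𝒦_s(Ω)`: nonnegative elements of `𝒟_s(Ω)` with `(−Δ)^s w ≤ 1` weakly in `Ω`. -/
def Ks (n : ℕ) (s : ℝ) (Ω : Set (Rn n)) (w : Rn n → ℝ) : Prop :=
  Ds n s Ω w ∧ (∀ᵐ x : Rn n, 0 ≤ w x) ∧
    ∀ v : Rn n → ℝ, Ds n s Ω v → (∀ᵐ x : Rn n, 0 ≤ v x) →
      energy n s w v ≤ ∫ x : Rn n, v x

/-! ### Auxiliary definitions and lemmas -/


section Aux

variable {n : ℕ} {s : ℝ}

private def ker (n : ℕ) (s : ℝ) (p : Rn n × Rn n) : ℝ := ‖p.1 - p.2‖ ^ ((n : ℝ) + 2 * s)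

private lemma ker_nonneg (n : ℕ) (s : ℝ) (p : Rn n × Rn n) : 0 ≤ ker n s p :=
  Real.rpow_nonneg (norm_nonneg _) _

private lemma ker_continuous (hr : 0 ≤ (n : ℝ) + 2 * s) : Continuous (ker n s) :=
  (Real.continuous_rpow_const hr).comp (continuous_fst.sub continuous_snd).norm

private lemma gagSq_eq (u : Rn n → ℝ) :
    gagSq n s u = ∫⁻ p : Rn n × Rn n, ENNReal.ofReal ((u p.1 - u p.2) ^ 2 / ker n s p) := rfl

private lemma energy_eq (u v : Rn n → ℝ) :
    energy n s u v =
      (cns n s / 2) * ∫ p : Rn n × Rn n, (u p.1 - u p.2) * (v p.1 - v p.2) / ker n s p := rfl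

private lemma cns_nonneg (n : ℕ) (s : ℝ) : 0 ≤ cns n s := by
  refine inv_nonneg.mpr (integral_nonneg fun ζ => div_nonneg ?_ (Real.rpow_nonneg (norm_nonneg _) _))
  have := Real.cos_le_one (firstCoord ζ); linarith

private lemma aesm_sub_pair {f : Rn n → ℝ}
    (hf : AEStronglyMeasurable f (volume : Measure (Rn n))) :
    AEStronglyMeasurable (fun p : Rn n × Rn n => f p.1 - f p.2) volume := by
  have h1 : AEStronglyMeasurable (fun p : Rn n × Rn n => f p.1) volume := by
    rw [Measure.volume_eq_prod]
    exact hf.comp_quasiMeasurePreserving Measure.quasiMeasurePreserving_fst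
  have h2 : AEStronglyMeasurable (fun p : Rn n × Rn n => f p.2) volume := by
    rw [Measure.volume_eq_prod]
    exact hf.comp_quasiMeasurePreserving Measure.quasiMeasurePreserving_snd
  exact h1.sub h2

private lemma ae_pair {P Q : Rn n → Prop} (hP : ∀ᵐ x : Rn n, P x) (hQ : ∀ᵐ x : Rn n, Q x) :
    ∀ᵐ p : Rn n × Rn n, P p.1 ∧ Q p.2 := by
  rw [Measure.volume_eq_prod]
  exact (Measure.quasiMeasurePreserving_fst.ae hP).and
    (Measure.quasiMeasurePreserving_snd.ae hQ)

private lemma aesm_sq_div (hr : 0 ≤ (n : ℝ) + 2 * s) {g : Rn n → ℝ}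
    (hm : AEStronglyMeasurable g (volume : Measure (Rn n))) :
    AEStronglyMeasurable (fun p : Rn n × Rn n => (g p.1 - g p.2) ^ 2 / ker n s p) volume := by
  have := ((aesm_sub_pair hm).mul (aesm_sub_pair hm)).mul
    ((ker_continuous hr).measurable.inv.aestronglyMeasurable)
  have heq : (fun p : Rn n × Rn n => (g p.1 - g p.2) ^ 2 / ker n s p) =
      fun p : Rn n × Rn n => (g p.1 - g p.2) * (g p.1 - g p.2) * (ker n s p)⁻¹ := by
    funext p; rw [sq, div_eq_mul_inv]
  rw [heq]; exact this

end Aux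

section Aux2

variable {n : ℕ} {s : ℝ}

private lemma sq_le_two_sq {A C D : ℝ} (hA : |A| ≤ C + D) (hC : 0 ≤ C) (hD : 0 ≤ D) :
    A ^ 2 ≤ 2 * C ^ 2 + 2 * D ^ 2 := by
  nlinarith [sq_abs A, abs_nonneg A, mul_self_le_mul_self (abs_nonneg A) hA, sq_nonneg (C - D)]

private lemma max_sub_sq_le (a b c d : ℝ) : (max a b - max c d) ^ 2 ≤ (a - c) ^ 2 + (b - d) ^ 2 := by
  have h := abs_max_sub_max_le_max a b c d
  have h2 : (max a b - max c d) ^ 2 ≤ (max |a - c| |b - d|) ^ 2 := by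
    rw [← sq_abs (max a b - max c d)]
    exact pow_le_pow_left₀ (abs_nonneg _) h 2
  rcases max_cases |a - c| |b - d| with ⟨he, _⟩ | ⟨he, _⟩ <;> rw [he] at h2 <;>
    nlinarith [sq_nonneg (a - c), sq_nonneg (b - d), sq_abs (a - c), sq_abs (b - d)]

private lemma sub_sq_le_two (A B : ℝ) : (A - B) ^ 2 ≤ 2 * A ^ 2 + 2 * B ^ 2 := by
  nlinarith [sq_nonneg (A + B)]

private lemma max_eq_add_max_sub (a b : ℝ) : max a b = b + max (a - b) 0 := by
  rcases le_total a b with h | h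
  · rw [max_eq_right h, max_eq_right (by linarith)]; ring
  · rw [max_eq_left h, max_eq_left (by linarith)]; ring

private lemma trunc_abs_le {a k : ℝ} (hk : 0 ≤ k) : |max 0 (min a k)| ≤ |a| := by
  rcases le_total a 0 with h | h
  · rw [max_eq_left (le_trans (min_le_left a k) h)]; simp
  · rw [max_eq_right (le_min h hk), abs_of_nonneg (le_min h hk), abs_of_nonneg h]
    exact min_le_left a k

private lemma trunc_contract (a b k : ℝ) : |max 0 (min a k) - max 0 (min b k)| ≤ |a - b| := by
  have h1 : |max 0 (min a k) - max 0 (min b k)| ≤ |min a k - min b k| := by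
    rw [max_comm 0 (min a k), max_comm 0 (min b k)]
    exact abs_max_sub_max_le_abs _ _ 0
  refine h1.trans ?_
  have := abs_min_sub_min_le_max a k b k
  simpa using this

/-! ### The clamp function -/

private def hcl (ε t : ℝ) : ℝ := min 1 (max 0 (t / ε))

private lemma hcl_nonneg (ε t : ℝ) : 0 ≤ hcl ε t := le_min zero_le_one (le_max_left _ _)

private lemma hcl_le_one (ε t : ℝ) : hcl ε t ≤ 1 := min_le_left _ _

private lemma hcl_mono {ε : ℝ} (hε : 0 < ε) {a b : ℝ} (hab : a ≤ b) : hcl ε a ≤ hcl ε b :=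
  min_le_min le_rfl (max_le_max le_rfl (by gcongr))

private lemma hcl_mono_mul {ε : ℝ} (hε : 0 < ε) (a b : ℝ) :
    0 ≤ (a - b) * (hcl ε a - hcl ε b) := by
  rcases le_total a b with h | h
  · have hm := hcl_mono hε h
    nlinarith [mul_nonneg (neg_nonneg.mpr (sub_nonpos.mpr h)) (neg_nonneg.mpr (sub_nonpos.mpr hm))]
  · exact mul_nonneg (by linarith) (by linarith [hcl_mono hε h])

private lemma hcl_lip {ε : ℝ} (hε : 0 < ε) (a b : ℝ) : |hcl ε a - hcl ε b| ≤ |a - b| / ε := by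
  have h1 : |hcl ε a - hcl ε b| ≤ |max 0 (a / ε) - max 0 (b / ε)| :=
    (abs_min_sub_min_le_max _ _ _ _).trans (max_le (by simp) le_rfl)
  have h2 : |max (0:ℝ) (a / ε) - max 0 (b / ε)| ≤ |a / ε - b / ε| :=
    (abs_max_sub_max_le_max _ _ _ _).trans (max_le (by simp) le_rfl)
  calc |hcl ε a - hcl ε b| ≤ |a / ε - b / ε| := h1.trans h2
    _ = |a - b| / ε := by rw [div_sub_div_same, abs_div, abs_of_pos hε]

private lemma hcl_continuous (ε : ℝ) : Continuous (hcl ε) :=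
  continuous_const.min (continuous_const.max (continuous_id.div_const ε))

private lemma hcl_tendsto (t : ℝ) :
    Filter.Tendsto (fun k : ℕ => hcl (1 / ((k : ℝ) + 1)) t) Filter.atTop
      (nhds (if 0 < t then (1:ℝ) else 0)) := by
  rcases lt_or_ge 0 t with ht | ht
  · rw [if_pos ht]
    apply tendsto_atTop_of_eventually_const (i₀ := Nat.ceil (1 / t))
    intro k hk
    have hk1 : (1:ℝ) / t ≤ k := le_trans (Nat.le_ceil _) (by exact_mod_cast hk)
    have hne : t ≠ 0 := ht.ne'
    have h1 : t * (1 / t) = 1 := by field_simp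
    have hone : (1:ℝ) ≤ t / (1 / ((k : ℝ) + 1)) := by
      rw [div_eq_mul_inv, one_div, inv_inv]
      nlinarith [mul_le_mul_of_nonneg_left hk1 ht.le]
    unfold hcl
    rw [max_eq_right (by linarith), min_eq_left hone]
  · rw [if_neg (not_lt.mpr ht)]
    have hz : ∀ k : ℕ, hcl (1 / ((k : ℝ) + 1)) t = 0 := by
      intro k
      have hp : (0:ℝ) < 1 / ((k : ℝ) + 1) := by positivity
      have : t / (1 / ((k : ℝ) + 1)) ≤ 0 := by
        rw [div_eq_mul_inv]
        exact mul_nonpos_iff.mpr (Or.inr ⟨ht, by positivity⟩)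
      unfold hcl
      rw [max_eq_left this, min_eq_right zero_le_one]
    have he : (fun k : ℕ => hcl (1 / ((k : ℝ) + 1)) t) = fun _ : ℕ => (0:ℝ) := funext hz
    rw [he]
    exact tendsto_const_nhds

private lemma key0 (a b fx fy : ℝ) (hfx : 0 ≤ fx) (hfy : 0 ≤ fy) :
    (max a 0 - max b 0) * (fx - fy) ≤
      (a - b) * (fx * (if 0 < a then (1:ℝ) else 0) - fy * (if 0 < b then (1:ℝ) else 0)) := by
  rcases lt_or_ge 0 a with ha | ha <;> rcases lt_or_ge 0 b with hb | hb
  · rw [if_pos ha, if_pos hb, max_eq_left ha.le, max_eq_left hb.le]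
    ring_nf
    exact le_rfl
  · rw [if_pos ha, if_neg (not_lt.mpr hb), max_eq_left ha.le, max_eq_right hb]
    nlinarith [mul_nonneg (neg_nonneg.mpr hb) hfx, mul_nonneg ha.le hfy]
  · rw [if_neg (not_lt.mpr ha), if_pos hb, max_eq_right ha, max_eq_left hb.le]
    nlinarith [mul_nonneg (neg_nonneg.mpr ha) hfy, mul_nonneg hb.le hfx]
  · rw [if_neg (not_lt.mpr ha), if_neg (not_lt.mpr hb), max_eq_right ha, max_eq_right hb]
    simp

private lemma keyEps {a b fx fy Ha Hb : ℝ} (hfx : 0 ≤ fx)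
    (hHb0 : 0 ≤ Hb) (hHb1 : Hb ≤ 1) (hAB : 0 ≤ (a - b) * (Ha - Hb)) :
    -(2 * (|a - b| * |fx - fy|)) ≤
      (a - b) * (fx * Ha - fy * Hb) - (max a 0 - max b 0) * (fx - fy) := by
  set X := (a - b) * (fx - fy) with hX
  have e1 : (a - b) * (fx * Ha - fy * Hb) = X * Hb + fx * ((a - b) * (Ha - Hb)) := by
    rw [hX]; ring
  have habs : |X| = |a - b| * |fx - fy| := abs_mul _ _
  have h2 : -( |a - b| * |fx - fy|) ≤ X * Hb := by
    have hp1 : 0 ≤ (X + |X|) * Hb :=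
      mul_nonneg (by linarith [neg_abs_le X]) hHb0
    have hp2 : 0 ≤ |X| * (1 - Hb) := mul_nonneg (abs_nonneg X) (by linarith)
    nlinarith [hp1, hp2]
  have h3 : (max a 0 - max b 0) * (fx - fy) ≤ |a - b| * |fx - fy| := by
    have hm := abs_max_sub_max_le_abs a b 0
    calc (max a 0 - max b 0) * (fx - fy) ≤ |(max a 0 - max b 0) * (fx - fy)| := le_abs_self _
      _ = |max a 0 - max b 0| * |fx - fy| := abs_mul _ _
      _ ≤ |a - b| * |fx - fy| := mul_le_mul_of_nonneg_right hm (abs_nonneg _)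
  have h4 : 0 ≤ fx * ((a - b) * (Ha - Hb)) := mul_nonneg hfx hAB
  linarith [e1, h2, h3, h4]

private lemma prod_diff_bound {φx φy hx hy gx gy Mr ε : ℝ} (hφy0 : 0 ≤ φy) (hφyM : φy ≤ Mr)
    (hx0 : 0 ≤ hx) (hx1 : hx ≤ 1) (hlip : |hx - hy| ≤ |gx - gy| / ε) (hε : 0 < ε) :
    (φx * hx - φy * hy) ^ 2 ≤ 2 * (φx - φy) ^ 2 + 2 * (Mr / ε) ^ 2 * (gx - gy) ^ 2 := by
  have hMr : 0 ≤ Mr := le_trans hφy0 hφyM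
  have h1 : |φx * hx - φy * hy| ≤ |φx - φy| + Mr * (|gx - gy| / ε) := by
    have e : φx * hx - φy * hy = (φx - φy) * hx + φy * (hx - hy) := by ring
    rw [e]
    refine (abs_add_le _ _).trans (add_le_add ?_ ?_)
    · rw [abs_mul]
      exact mul_le_of_le_one_right (abs_nonneg _) (abs_le.mpr ⟨by linarith, hx1⟩)
    · rw [abs_mul, abs_of_nonneg hφy0]
      exact mul_le_mul hφyM hlip (abs_nonneg _) hMr
  have h2 := sq_le_two_sq h1 (abs_nonneg _) (mul_nonneg hMr (div_nonneg (abs_nonneg _) hε.le))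
  have e2 : (Mr * (|gx - gy| / ε)) ^ 2 = (Mr / ε) ^ 2 * |gx - gy| ^ 2 := by ring
  rw [e2, sq_abs, sq_abs] at h2
  linarith

private lemma div_le_div_nonneg_denom {a b K : ℝ} (h : a ≤ b) (hK : 0 ≤ K) : a / K ≤ b / K := by
  rw [div_eq_mul_inv, div_eq_mul_inv]
  exact mul_le_mul_of_nonneg_right h (inv_nonneg.mpr hK)

end Aux2

section Aux3

variable {n : ℕ} {s : ℝ}

private lemma ptwise_div_le {num₁ num₂ K : ℝ} (h : num₁ ≤ num₂) (hK : 0 ≤ K) :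
    num₁ / K ≤ num₂ / K := div_le_div_nonneg_denom h hK

private lemma aemeas_ofReal_sq (hr : 0 ≤ (n : ℝ) + 2 * s) {g : Rn n → ℝ} (C : ℝ)
    (hm : AEStronglyMeasurable g (volume : Measure (Rn n))) :
    AEMeasurable (fun p : Rn n × Rn n => ENNReal.ofReal (C * ((g p.1 - g p.2) ^ 2 / ker n s p)))
      (volume : Measure (Rn n × Rn n)) :=
  (aestronglyMeasurable_const.mul (aesm_sq_div hr hm)).aemeasurable.ennreal_ofReal

private lemma gagSq_le_two (hr : 0 ≤ (n : ℝ) + 2 * s) {f g₁ g₂ : Rn n → ℝ} {C₁ C₂ : ℝ}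
    (hC₁ : 0 ≤ C₁) (hC₂ : 0 ≤ C₂)
    (hm₁ : AEStronglyMeasurable g₁ (volume : Measure (Rn n)))
    (hpt : ∀ p : Rn n × Rn n,
      (f p.1 - f p.2) ^ 2 ≤ C₁ * (g₁ p.1 - g₁ p.2) ^ 2 + C₂ * (g₂ p.1 - g₂ p.2) ^ 2) :
    gagSq n s f ≤ ENNReal.ofReal C₁ * gagSq n s g₁ + ENNReal.ofReal C₂ * gagSq n s g₂ := by
  rw [gagSq_eq (s := s) f, gagSq_eq (s := s) g₁, gagSq_eq (s := s) g₂]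
  have step1 : ∫⁻ p : Rn n × Rn n, ENNReal.ofReal ((f p.1 - f p.2) ^ 2 / ker n s p) ≤
      ∫⁻ p : Rn n × Rn n,
        (ENNReal.ofReal (C₁ * ((g₁ p.1 - g₁ p.2) ^ 2 / ker n s p)) +
         ENNReal.ofReal (C₂ * ((g₂ p.1 - g₂ p.2) ^ 2 / ker n s p))) := by
    refine lintegral_mono fun p => ?_
    have hKn := ker_nonneg n s p
    have hd : (f p.1 - f p.2) ^ 2 / ker n s p ≤
        C₁ * ((g₁ p.1 - g₁ p.2) ^ 2 / ker n s p) + C₂ * ((g₂ p.1 - g₂ p.2) ^ 2 / ker n s p) := by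
      have := ptwise_div_le (hpt p) hKn
      calc (f p.1 - f p.2) ^ 2 / ker n s p
          ≤ (C₁ * (g₁ p.1 - g₁ p.2) ^ 2 + C₂ * (g₂ p.1 - g₂ p.2) ^ 2) / ker n s p := this
        _ = C₁ * ((g₁ p.1 - g₁ p.2) ^ 2 / ker n s p) +
            C₂ * ((g₂ p.1 - g₂ p.2) ^ 2 / ker n s p) := by
            rw [add_div, mul_div_assoc, mul_div_assoc]
    calc ENNReal.ofReal ((f p.1 - f p.2) ^ 2 / ker n s p)
        ≤ ENNReal.ofReal (C₁ * ((g₁ p.1 - g₁ p.2) ^ 2 / ker n s p) +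
            C₂ * ((g₂ p.1 - g₂ p.2) ^ 2 / ker n s p)) := ENNReal.ofReal_le_ofReal hd
      _ ≤ _ := ENNReal.ofReal_add_le
  have step2 : ∫⁻ p : Rn n × Rn n,
      (ENNReal.ofReal (C₁ * ((g₁ p.1 - g₁ p.2) ^ 2 / ker n s p)) +
       ENNReal.ofReal (C₂ * ((g₂ p.1 - g₂ p.2) ^ 2 / ker n s p))) =
      (∫⁻ p : Rn n × Rn n, ENNReal.ofReal (C₁ * ((g₁ p.1 - g₁ p.2) ^ 2 / ker n s p))) +
      ∫⁻ p : Rn n × Rn n, ENNReal.ofReal (C₂ * ((g₂ p.1 - g₂ p.2) ^ 2 / ker n s p)) :=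
    lintegral_add_left' (aemeas_ofReal_sq hr C₁ hm₁) _
  have pull : ∀ (C : ℝ), 0 ≤ C → ∀ g : Rn n → ℝ,
      (∫⁻ p : Rn n × Rn n, ENNReal.ofReal (C * ((g p.1 - g p.2) ^ 2 / ker n s p))) =
      ENNReal.ofReal C * ∫⁻ p : Rn n × Rn n, ENNReal.ofReal ((g p.1 - g p.2) ^ 2 / ker n s p) := by
    intro C hC g
    have : ∀ p : Rn n × Rn n, ENNReal.ofReal (C * ((g p.1 - g p.2) ^ 2 / ker n s p)) =
        ENNReal.ofReal C * ENNReal.ofReal ((g p.1 - g p.2) ^ 2 / ker n s p) := fun p =>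
      ENNReal.ofReal_mul hC
    simp only [this]
    exact lintegral_const_mul' _ _ ENNReal.ofReal_ne_top
  calc ∫⁻ p : Rn n × Rn n, ENNReal.ofReal ((f p.1 - f p.2) ^ 2 / ker n s p) ≤ _ := step1
    _ = _ := step2
    _ = _ := by rw [pull C₁ hC₁ g₁, pull C₂ hC₂ g₂]

private lemma integrable_pair (hr : 0 ≤ (n : ℝ) + 2 * s) {f g : Rn n → ℝ}
    (hfm : AEStronglyMeasurable f (volume : Measure (Rn n)))
    (hgm : AEStronglyMeasurable g (volume : Measure (Rn n)))
    (hf2 : gagSq n s f < ⊤) (hg2 : gagSq n s g < ⊤) :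
    Integrable (fun p : Rn n × Rn n => (f p.1 - f p.2) * (g p.1 - g p.2) / ker n s p)
      (volume : Measure (Rn n × Rn n)) := by
  constructor
  · have := ((aesm_sub_pair hfm).mul (aesm_sub_pair hgm)).mul
      ((ker_continuous hr).measurable.inv.aestronglyMeasurable)
    have heq : (fun p : Rn n × Rn n => (f p.1 - f p.2) * (g p.1 - g p.2) / ker n s p) =
        fun p : Rn n × Rn n => (f p.1 - f p.2) * (g p.1 - g p.2) * (ker n s p)⁻¹ := by
      funext p; rw [div_eq_mul_inv]
    rw [heq]; exact this
  · rw [hasFiniteIntegral_iff_norm]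
    have hpt : ∀ p : Rn n × Rn n,
        ENNReal.ofReal ‖(f p.1 - f p.2) * (g p.1 - g p.2) / ker n s p‖ ≤
        ENNReal.ofReal ((f p.1 - f p.2) ^ 2 / ker n s p) +
        ENNReal.ofReal ((g p.1 - g p.2) ^ 2 / ker n s p) := by
      intro p
      have hKn := ker_nonneg n s p
      have h1 : ‖(f p.1 - f p.2) * (g p.1 - g p.2) / ker n s p‖ =
          |(f p.1 - f p.2) * (g p.1 - g p.2)| / ker n s p := by
        rw [Real.norm_eq_abs, abs_div, abs_of_nonneg hKn]
      have h2 : |(f p.1 - f p.2) * (g p.1 - g p.2)| ≤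
          (f p.1 - f p.2) ^ 2 + (g p.1 - g p.2) ^ 2 := by
        rw [abs_mul]
        nlinarith [sq_abs (f p.1 - f p.2), sq_abs (g p.1 - g p.2),
          sq_nonneg (|f p.1 - f p.2| - |g p.1 - g p.2|), abs_nonneg (f p.1 - f p.2),
          abs_nonneg (g p.1 - g p.2)]
      calc ENNReal.ofReal ‖(f p.1 - f p.2) * (g p.1 - g p.2) / ker n s p‖
          ≤ ENNReal.ofReal (((f p.1 - f p.2) ^ 2 + (g p.1 - g p.2) ^ 2) / ker n s p) := by
            rw [h1]; exact ENNReal.ofReal_le_ofReal (ptwise_div_le h2 hKn)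
        _ = ENNReal.ofReal ((f p.1 - f p.2) ^ 2 / ker n s p +
              (g p.1 - g p.2) ^ 2 / ker n s p) := by rw [add_div]
        _ ≤ _ := ENNReal.ofReal_add_le
    calc ∫⁻ p : Rn n × Rn n, ENNReal.ofReal ‖(f p.1 - f p.2) * (g p.1 - g p.2) / ker n s p‖
        ≤ ∫⁻ p : Rn n × Rn n, (ENNReal.ofReal ((f p.1 - f p.2) ^ 2 / ker n s p) +
            ENNReal.ofReal ((g p.1 - g p.2) ^ 2 / ker n s p)) := lintegral_mono hpt
      _ = gagSq n s f + gagSq n s g := by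
          rw [gagSq_eq (s := s) f, gagSq_eq (s := s) g]
          exact lintegral_add_left' ((aesm_sq_div hr hfm).aemeasurable.ennreal_ofReal) _
      _ < ⊤ := ENNReal.add_lt_top.mpr ⟨hf2, hg2⟩

private lemma Ds_integrable {Ω : Set (Rn n)} (hΩb : Bornology.IsBounded Ω) {f : Rn n → ℝ}
    (hf : Ds n s Ω f) : Integrable f (volume : Measure (Rn n)) := by
  obtain ⟨hL2, -, hout⟩ := hf
  set N := {x : Rn n | ¬(x ∉ Ω → f x = 0)} with hN
  have hNnull : (volume : Measure (Rn n)) N = 0 := hout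
  have h1 : MemLp f 1 (volume : Measure (Rn n)) := by
    refine MemLp.mono_exponent_of_measure_support_ne_top hL2 (s := Ω ∪ N) ?_ ?_ one_le_two
    · intro x hx
      rw [Set.mem_union] at hx
      push_neg at hx
      by_contra hfx
      exact hx.2 (fun hxΩ => by_contra fun h' => hfx (by tauto))
    · refine ne_top_of_le_ne_top ?_ (measure_union_le Ω N)
      rw [hNnull, add_zero]
      exact hΩb.measure_lt_top.ne
  exact memLp_one_iff_integrable.mp h1

end Aux3

section Main

private lemma bounded_case {n : ℕ} {s : ℝ} (hr0 : 0 < (n : ℝ) + 2 * s)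
    {Ω : Set (Rn n)} (hΩb : Bornology.IsBounded Ω)
    {u v : Rn n → ℝ} (hu : Ks n s Ω u) (hv : Ks n s Ω v)
    (hwL2 : MemLp (fun x => max (u x) (v x)) 2 (volume : Measure (Rn n)))
    (hwG : gagSq n s (fun x => max (u x) (v x)) < ⊤)
    {φ : Rn n → ℝ} (hφ : Ds n s Ω φ) {M : ℝ} (hφ0 : ∀ x, 0 ≤ φ x) (hφM : ∀ x, φ x ≤ M) :
    energy n s (fun x => max (u x) (v x)) φ ≤ ∫ x : Rn n, φ x := by
  have hr := hr0.le
  obtain ⟨⟨huL2, huG, huZ⟩, huP, huT⟩ := hu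
  obtain ⟨⟨hvL2, hvG, hvZ⟩, hvP, hvT⟩ := hv
  set c := cns n s with hcdef
  have hc0 : 0 ≤ c := cns_nonneg n s
  set w : Rn n → ℝ := fun x => max (u x) (v x) with hwdef
  set g : Rn n → ℝ := fun x => u x - v x with hgdef
  have hgsm : AEStronglyMeasurable g (volume : Measure (Rn n)) :=
    huL2.aestronglyMeasurable.sub hvL2.aestronglyMeasurable
  have hφsm := hφ.1.aestronglyMeasurable
  have hφG : gagSq n s φ < ⊤ := hφ.2.1
  have hwsm := hwL2.aestronglyMeasurable
  have hgG : gagSq n s g < ⊤ := by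
    refine lt_of_le_of_lt (gagSq_le_two hr (C₁ := 2) (C₂ := 2) (g₁ := u) (g₂ := v)
      (by norm_num) (by norm_num) huL2.aestronglyMeasurable ?_) ?_
    · intro p
      have he : g p.1 - g p.2 = (u p.1 - u p.2) - (v p.1 - v p.2) := by
        simp only [hgdef]; ring
      rw [he]; nlinarith [sq_nonneg ((u p.1 - u p.2) + (v p.1 - v p.2))]
    · exact ENNReal.add_lt_top.mpr ⟨ENNReal.mul_lt_top ENNReal.ofReal_lt_top huG,
        ENNReal.mul_lt_top ENNReal.ofReal_lt_top hvG⟩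
  have hM0 : 0 ≤ M := le_trans (hφ0 0) (hφM 0)
  rcases hc0.eq_or_lt with hc | hc
  · have hz : energy n s w φ = 0 := by
      rw [energy_eq (s := s) w φ, ← hcdef, ← hc]; simp
    rw [hz]; exact integral_nonneg hφ0
  set ε : ℕ → ℝ := fun k => 1 / ((k : ℝ) + 1) with hε
  have hεpos : ∀ k, 0 < ε k := fun k => by rw [hε]; positivity
  set ψ : ℕ → Rn n → ℝ := fun k x => φ x * hcl (ε k) (g x) with hψ
  set ψ' : ℕ → Rn n → ℝ := fun k x => φ x - ψ k x with hψ'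
  have hψsm : ∀ k, AEStronglyMeasurable (ψ k) (volume : Measure (Rn n)) := fun k =>
    hφsm.mul ((hcl_continuous (ε k)).comp_aestronglyMeasurable hgsm)
  have hψ'sm : ∀ k, AEStronglyMeasurable (ψ' k) (volume : Measure (Rn n)) := fun k =>
    hφsm.sub (hψsm k)
  have hψ'e : ∀ k x, ψ' k x = φ x * (1 - hcl (ε k) (g x)) := by
    intro k x; simp only [hψ', hψ]; ring
  have hψG : ∀ k, gagSq n s (ψ k) < ⊤ := by
    intro k
    refine lt_of_le_of_lt (gagSq_le_two hr (C₁ := 2) (C₂ := 2 * (M / ε k) ^ 2) (g₁ := φ)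
      (g₂ := g) (by norm_num) (by positivity) hφsm ?_) ?_
    · intro p
      have := prod_diff_bound (φx := φ p.1) (φy := φ p.2) (hx := hcl (ε k) (g p.1))
        (hy := hcl (ε k) (g p.2)) (gx := g p.1) (gy := g p.2) (Mr := M) (ε := ε k)
        (hφ0 p.2) (hφM p.2) (hcl_nonneg _ _) (hcl_le_one _ _) (hcl_lip (hεpos k) _ _) (hεpos k)
      simpa only [hψ] using this
    · exact ENNReal.add_lt_top.mpr ⟨ENNReal.mul_lt_top ENNReal.ofReal_lt_top hφG,
        ENNReal.mul_lt_top ENNReal.ofReal_lt_top hgG⟩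
  have hψ'G : ∀ k, gagSq n s (ψ' k) < ⊤ := by
    intro k
    refine lt_of_le_of_lt (gagSq_le_two hr (C₁ := 2) (C₂ := 2 * (M / ε k) ^ 2) (g₁ := φ)
      (g₂ := g) (by norm_num) (by positivity) hφsm ?_) ?_
    · intro p
      have hb := prod_diff_bound (φx := φ p.1) (φy := φ p.2)
        (hx := 1 - hcl (ε k) (g p.1)) (hy := 1 - hcl (ε k) (g p.2)) (gx := g p.1)
        (gy := g p.2) (Mr := M) (ε := ε k) (hφ0 p.2) (hφM p.2)
        (by linarith [hcl_le_one (ε k) (g p.1)]) (by linarith [hcl_nonneg (ε k) (g p.1)])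
        (by rw [show (1 - hcl (ε k) (g p.1)) - (1 - hcl (ε k) (g p.2)) =
              -(hcl (ε k) (g p.1) - hcl (ε k) (g p.2)) by ring, abs_neg]
            exact hcl_lip (hεpos k) _ _) (hεpos k)
      rw [hψ'e k p.1, hψ'e k p.2]
      exact hb
    · exact ENNReal.add_lt_top.mpr ⟨ENNReal.mul_lt_top ENNReal.ofReal_lt_top hφG,
        ENNReal.mul_lt_top ENNReal.ofReal_lt_top hgG⟩
  have hψDs : ∀ k, Ds n s Ω (ψ k) := by
    intro k
    refine ⟨MemLp.of_le hφ.1 (hψsm k) (Filter.Eventually.of_forall fun x => ?_), hψG k, ?_⟩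
    · rw [Real.norm_eq_abs, Real.norm_eq_abs]
      simp only [hψ]
      rw [abs_mul]
      exact mul_le_of_le_one_right (abs_nonneg _)
        (abs_le.mpr ⟨by linarith [hcl_nonneg (ε k) (g x)], hcl_le_one _ _⟩)
    · refine hφ.2.2.mono fun x hx hxΩ => ?_
      simp only [hψ]; rw [hx hxΩ, zero_mul]
  have hψ'Ds : ∀ k, Ds n s Ω (ψ' k) := by
    intro k
    refine ⟨MemLp.of_le hφ.1 (hψ'sm k) (Filter.Eventually.of_forall fun x => ?_), hψ'G k, ?_⟩
    · rw [Real.norm_eq_abs, Real.norm_eq_abs, hψ'e k x, abs_mul]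
      exact mul_le_of_le_one_right (abs_nonneg _)
        (abs_le.mpr ⟨by linarith [hcl_le_one (ε k) (g x)], by linarith [hcl_nonneg (ε k) (g x)]⟩)
    · refine hφ.2.2.mono fun x hx hxΩ => ?_
      rw [hψ'e k x, hx hxΩ, zero_mul]
  have hψpos : ∀ k, ∀ᵐ x : Rn n, 0 ≤ ψ k x := fun k =>
    Filter.Eventually.of_forall fun x => by
      simp only [hψ]; exact mul_nonneg (hφ0 x) (hcl_nonneg _ _)
  have hψ'pos : ∀ k, ∀ᵐ x : Rn n, 0 ≤ ψ' k x := fun k =>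
    Filter.Eventually.of_forall fun x => by
      rw [hψ'e k x]
      exact mul_nonneg (hφ0 x) (by linarith [hcl_le_one (ε k) (g x)])
  have iφ : Integrable φ (volume : Measure (Rn n)) := Ds_integrable hΩb hφ
  have iψ : ∀ k, Integrable (ψ k) (volume : Measure (Rn n)) := fun k =>
    Ds_integrable hΩb (hψDs k)
  have hTu : ∀ k, energy n s u (ψ k) ≤ ∫ x : Rn n, ψ k x := fun k =>
    huT (ψ k) (hψDs k) (hψpos k)
  have hTv : ∀ k, energy n s v (ψ' k) ≤ ∫ x : Rn n, ψ' k x := fun k =>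
    hvT (ψ' k) (hψ'Ds k) (hψ'pos k)
  have hsplit : ∀ k, (∫ x : Rn n, ψ k x) + ∫ x : Rn n, ψ' k x = ∫ x : Rn n, φ x := by
    intro k
    have : (fun x => ψ' k x) = fun x => φ x - ψ k x := by funext x; simp only [hψ']
    rw [this, integral_sub iφ (iψ k)]
    ring
  set Iu : ℕ → (Rn n × Rn n) → ℝ := fun k p =>
    (u p.1 - u p.2) * (ψ k p.1 - ψ k p.2) / ker n s p with hIu
  set Iv : ℕ → (Rn n × Rn n) → ℝ := fun k p =>
    (v p.1 - v p.2) * (ψ' k p.1 - ψ' k p.2) / ker n s p with hIv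
  set Iw : (Rn n × Rn n) → ℝ := fun p =>
    (w p.1 - w p.2) * (φ p.1 - φ p.2) / ker n s p with hIw
  have iIu : ∀ k, Integrable (Iu k) (volume : Measure (Rn n × Rn n)) := fun k =>
    integrable_pair hr huL2.aestronglyMeasurable (hψsm k) huG (hψG k)
  have iIv : ∀ k, Integrable (Iv k) (volume : Measure (Rn n × Rn n)) := fun k =>
    integrable_pair hr hvL2.aestronglyMeasurable (hψ'sm k) hvG (hψ'G k)
  have iIw : Integrable Iw (volume : Measure (Rn n × Rn n)) :=
    integrable_pair hr hwsm hφsm hwG hφG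
  have heu : ∀ k, energy n s u (ψ k) = (c / 2) * ∫ p : Rn n × Rn n, Iu k p := fun k =>
    energy_eq u (ψ k)
  have hev : ∀ k, energy n s v (ψ' k) = (c / 2) * ∫ p : Rn n × Rn n, Iv k p := fun k =>
    energy_eq v (ψ' k)
  have hew : energy n s w φ = (c / 2) * ∫ p : Rn n × Rn n, Iw p := energy_eq w φ
  set Sd : ℕ → (Rn n × Rn n) → ℝ := fun k p =>
    ((g p.1 - g p.2) * (φ p.1 * hcl (ε k) (g p.1) - φ p.2 * hcl (ε k) (g p.2)) -
      (max (g p.1) 0 - max (g p.2) 0) * (φ p.1 - φ p.2)) / ker n s p with hSd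
  set S0 : (Rn n × Rn n) → ℝ := fun p =>
    ((g p.1 - g p.2) * (φ p.1 * (if 0 < g p.1 then (1:ℝ) else 0) -
        φ p.2 * (if 0 < g p.2 then (1:ℝ) else 0)) -
      (max (g p.1) 0 - max (g p.2) 0) * (φ p.1 - φ p.2)) / ker n s p with hS0
  set bl : (Rn n × Rn n) → ℝ := fun p =>
    2 * (|g p.1 - g p.2| * |φ p.1 - φ p.2|) / ker n s p with hbl
  have hptw : ∀ k p, Iu k p + Iv k p - Iw p = Sd k p := by
    intro k p
    have e1 : w p.1 = v p.1 + max (g p.1) 0 := by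
      simp only [hwdef, hgdef]; exact max_eq_add_max_sub _ _
    have e2 : w p.2 = v p.2 + max (g p.2) 0 := by
      simp only [hwdef, hgdef]; exact max_eq_add_max_sub _ _
    have eu1 : u p.1 = v p.1 + g p.1 := by simp only [hgdef]; ring
    have eu2 : u p.2 = v p.2 + g p.2 := by simp only [hgdef]; ring
    have hcomb : Iu k p + Iv k p - Iw p =
        ((u p.1 - u p.2) * (ψ k p.1 - ψ k p.2) + (v p.1 - v p.2) * (ψ' k p.1 - ψ' k p.2) -
          (w p.1 - w p.2) * (φ p.1 - φ p.2)) / ker n s p := by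
      simp only [hIu, hIv, hIw]
      rw [← add_div, ← sub_div]
    rw [hcomb]
    simp only [hSd]
    congr 1
    rw [e1, e2, eu1, eu2, hψ'e k p.1, hψ'e k p.2]
    simp only [hψ]
    ring
  have hAk_eq : ∀ k, (∫ p : Rn n × Rn n, Iu k p) + (∫ p : Rn n × Rn n, Iv k p) -
      (∫ p : Rn n × Rn n, Iw p) = ∫ p : Rn n × Rn n, Sd k p := by
    intro k
    calc (∫ p : Rn n × Rn n, Iu k p) + (∫ p : Rn n × Rn n, Iv k p) - ∫ p : Rn n × Rn n, Iw p
        = (∫ p : Rn n × Rn n, (Iu k p + Iv k p)) - ∫ p : Rn n × Rn n, Iw p := by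
          rw [integral_add (iIu k) (iIv k)]
      _ = ∫ p : Rn n × Rn n, (Iu k p + Iv k p - Iw p) :=
          (integral_sub ((iIu k).add (iIv k)) iIw).symm
      _ = ∫ p : Rn n × Rn n, Sd k p :=
          integral_congr_ae (Filter.Eventually.of_forall fun p => hptw k p)
  have iSd : ∀ k, Integrable (Sd k) (volume : Measure (Rn n × Rn n)) := fun k =>
    (((iIu k).add (iIv k)).sub iIw).congr (Filter.Eventually.of_forall (hptw k))
  have ibl : Integrable bl (volume : Measure (Rn n × Rn n)) := by
    have h := (integrable_pair hr hgsm hφsm hgG hφG).abs.const_mul 2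
    refine h.congr (Filter.Eventually.of_forall fun p => ?_)
    simp only [hbl]
    rw [abs_div, abs_mul, abs_of_nonneg (ker_nonneg n s p)]
    ring
  have hbl0 : ∀ p, 0 ≤ bl p := fun p => by
    simp only [hbl]
    exact div_nonneg (by positivity) (ker_nonneg n s p)
  have hlb : ∀ k p, -bl p ≤ Sd k p := by
    intro k p
    have hnum := keyEps (a := g p.1) (b := g p.2) (fx := φ p.1) (fy := φ p.2)
      (Ha := hcl (ε k) (g p.1)) (Hb := hcl (ε k) (g p.2)) (hφ0 p.1)
      (hcl_nonneg _ _) (hcl_le_one _ _) (hcl_mono_mul (hεpos k) _ _)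
    have hstep : -(2 * (|g p.1 - g p.2| * |φ p.1 - φ p.2|)) / ker n s p ≤ Sd k p := by
      simp only [hSd]
      exact div_le_div_nonneg_denom hnum (ker_nonneg n s p)
    calc -bl p = -(2 * (|g p.1 - g p.2| * |φ p.1 - φ p.2|)) / ker n s p := by
          simp only [hbl]; rw [neg_div]
      _ ≤ Sd k p := hstep
  have hS00 : ∀ p, 0 ≤ S0 p := by
    intro p
    simp only [hS0]
    refine div_nonneg ?_ (ker_nonneg n s p)
    have := key0 (g p.1) (g p.2) (φ p.1) (φ p.2) (hφ0 p.1) (hφ0 p.2)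
    linarith
  have htd : ∀ p, Filter.Tendsto (fun k => Sd k p) Filter.atTop (nhds (S0 p)) := by
    intro p
    simp only [hSd, hS0, hε]
    refine Filter.Tendsto.div_const (Filter.Tendsto.sub ?_ tendsto_const_nhds) _
    exact tendsto_const_nhds.mul
      ((tendsto_const_nhds.mul (hcl_tendsto (g p.1))).sub
        (tendsto_const_nhds.mul (hcl_tendsto (g p.2))))
  have claimA : ∀ δ : ℝ, 0 < δ → ∃ k, -δ ≤ (∫ p : Rn n × Rn n, Iu k p) +
      (∫ p : Rn n × Rn n, Iv k p) - ∫ p : Rn n × Rn n, Iw p := by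
    intro δ hδ
    by_cases hCb : δ ≤ ∫ p : Rn n × Rn n, bl p
    · by_contra hcon
      push_neg at hcon
      have hkey : ∀ k, (∫⁻ p : Rn n × Rn n, ENNReal.ofReal (Sd k p + bl p)) ≤
          ENNReal.ofReal ((∫ p : Rn n × Rn n, bl p) - δ) := by
        intro k
        have iSB : Integrable (fun p : Rn n × Rn n => Sd k p + bl p)
            (volume : Measure (Rn n × Rn n)) := (iSd k).add ibl
        rw [← ofReal_integral_eq_lintegral_ofReal iSB
          (Filter.Eventually.of_forall fun p => (by linarith [hlb k p] : (0:ℝ) ≤ Sd k p + bl p))]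
        apply ENNReal.ofReal_le_ofReal
        rw [integral_add (iSd k) ibl]
        linarith [hcon k, hAk_eq k]
      have hFatou : (∫⁻ p : Rn n × Rn n, ENNReal.ofReal (S0 p + bl p)) ≤
          Filter.liminf (fun k => ∫⁻ p : Rn n × Rn n, ENNReal.ofReal (Sd k p + bl p))
            Filter.atTop := by
        have hmeas : ∀ k, AEMeasurable (fun p : Rn n × Rn n => ENNReal.ofReal (Sd k p + bl p))
            (volume : Measure (Rn n × Rn n)) := fun k =>
          ((iSd k).add ibl).aestronglyMeasurable.aemeasurable.ennreal_ofReal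
        refine le_trans (le_of_eq (lintegral_congr fun p => ?_)) (lintegral_liminf_le' hmeas)
        have ht : Filter.Tendsto (fun k => ENNReal.ofReal (Sd k p + bl p)) Filter.atTop
            (nhds (ENNReal.ofReal (S0 p + bl p))) :=
          (ENNReal.continuous_ofReal.tendsto _).comp ((htd p).add tendsto_const_nhds)
        exact ht.liminf_eq.symm
      have hlow : ENNReal.ofReal (∫ p : Rn n × Rn n, bl p) ≤
          ∫⁻ p : Rn n × Rn n, ENNReal.ofReal (S0 p + bl p) := by
        rw [ofReal_integral_eq_lintegral_ofReal ibl (Filter.Eventually.of_forall hbl0)]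
        exact lintegral_mono fun p => ENNReal.ofReal_le_ofReal (by linarith [hS00 p])
      have hup : Filter.liminf (fun k => ∫⁻ p : Rn n × Rn n, ENNReal.ofReal (Sd k p + bl p))
          Filter.atTop ≤ ENNReal.ofReal ((∫ p : Rn n × Rn n, bl p) - δ) :=
        Filter.liminf_le_of_frequently_le' (Filter.Frequently.of_forall hkey)
      have hfinal : (∫ p : Rn n × Rn n, bl p) ≤ (∫ p : Rn n × Rn n, bl p) - δ :=
        (ENNReal.ofReal_le_ofReal_iff (by linarith)).mp
          (le_trans (le_trans hlow hFatou) hup)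
      linarith
    · push_neg at hCb
      refine ⟨0, ?_⟩
      have h1 : 0 ≤ ∫ p : Rn n × Rn n, (Sd 0 p + bl p) :=
        integral_nonneg fun p => by
          simp only [Pi.zero_apply]; linarith [hlb 0 p]
      rw [integral_add (iSd 0) ibl] at h1
      linarith [hAk_eq 0]
  have hfin : ∀ δ : ℝ, 0 < δ → energy n s w φ ≤ (∫ x : Rn n, φ x) + δ := by
    intro δ hδ
    have hc2 : 0 < c / 2 := by linarith
    obtain ⟨k, hk⟩ := claimA (δ / (c / 2)) (by positivity)
    have h5 : (c / 2) * (∫ p : Rn n × Rn n, Iw p) ≤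
        (c / 2) * ((∫ p : Rn n × Rn n, Iu k p) + (∫ p : Rn n × Rn n, Iv k p) + δ / (c / 2)) :=
      mul_le_mul_of_nonneg_left (by linarith) hc2.le
    have h6 : (c / 2) * ((∫ p : Rn n × Rn n, Iu k p) + (∫ p : Rn n × Rn n, Iv k p) + δ / (c / 2))
        = (c / 2) * (∫ p : Rn n × Rn n, Iu k p) + (c / 2) * (∫ p : Rn n × Rn n, Iv k p) + δ := by
      field_simp
    rw [hew]
    linarith [hTu k, hTv k, hsplit k, heu k, hev k]
  by_contra hcon2
  push_neg at hcon2
  have := hfin ((energy n s w φ - ∫ x : Rn n, φ x) / 2) (by linarith)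
  linarith

end Main

theorem stmt6 (n : ℕ) (hn : 1 ≤ n) (s : ℝ) (hs : s ∈ Set.Ioo (0:ℝ) 1)
    (Ω : Set (Rn n)) (hΩo : IsOpen Ω) (hΩb : Bornology.IsBounded Ω)
    (u v : Rn n → ℝ) (hu : Ks n s Ω u) (hv : Ks n s Ω v) :
    Ks n s Ω (fun x => max (u x) (v x)) := by
  have hr0 : 0 < (n : ℝ) + 2 * s := by
    have h1 : (0:ℝ) ≤ n := Nat.cast_nonneg n
    nlinarith [hs.1]
  have hr := hr0.le
  have huL2 := hu.1.1
  have hvL2 := hv.1.1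
  have huG := hu.1.2.1
  have hvG := hv.1.2.1
  have hwL2 : MemLp (fun x => max (u x) (v x)) 2 (volume : Measure (Rn n)) := huL2.sup hvL2
  have hwG : gagSq n s (fun x => max (u x) (v x)) < ⊤ := by
    refine lt_of_le_of_lt (gagSq_le_two hr (C₁ := 1) (C₂ := 1) (g₁ := u) (g₂ := v)
      zero_le_one zero_le_one huL2.aestronglyMeasurable (fun p => by
        simpa using max_sub_sq_le (u p.1) (v p.1) (u p.2) (v p.2))) ?_
    rw [ENNReal.ofReal_one, one_mul, one_mul]
    exact ENNReal.add_lt_top.mpr ⟨huG, hvG⟩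
  refine ⟨⟨hwL2, hwG, ?_⟩, ?_, ?_⟩
  · exact (hu.1.2.2.and hv.1.2.2).mono fun x hx hxΩ => by
      show max (u x) (v x) = 0
      rw [hx.1 hxΩ, hx.2 hxΩ]; exact max_self 0
  · exact hu.2.1.mono fun x hx =>
      (le_trans hx (le_max_left _ _) : 0 ≤ max (u x) (v x))
  · intro φ hφ hφpos
    set T : ℕ → Rn n → ℝ := fun k x => max 0 (min (φ x) (k:ℝ)) with hT
    have hTc : ∀ k : ℕ, Continuous fun t : ℝ => max 0 (min t (k:ℝ)) := fun k =>
      continuous_const.max (continuous_id.min continuous_const)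
    have hTsm : ∀ k, AEStronglyMeasurable (T k) (volume : Measure (Rn n)) := fun k =>
      (hTc k).comp_aestronglyMeasurable hφ.1.aestronglyMeasurable
    have hTDs : ∀ k, Ds n s Ω (T k) := by
      intro k
      refine ⟨MemLp.of_le hφ.1 (hTsm k) (Filter.Eventually.of_forall fun x => ?_), ?_, ?_⟩
      · rw [Real.norm_eq_abs, Real.norm_eq_abs]
        exact trunc_abs_le (Nat.cast_nonneg k)
      · refine lt_of_le_of_lt (gagSq_le_two hr (C₁ := 1) (C₂ := 0) (g₁ := φ) (g₂ := φ)
          zero_le_one le_rfl hφ.1.aestronglyMeasurable (fun p => ?_)) ?_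
        · have h2 : (T k p.1 - T k p.2) ^ 2 ≤ (φ p.1 - φ p.2) ^ 2 := by
            rw [← sq_abs (T k p.1 - T k p.2), ← sq_abs (φ p.1 - φ p.2)]
            exact pow_le_pow_left₀ (abs_nonneg _)
              (by simpa [hT] using trunc_contract (φ p.1) (φ p.2) (k:ℝ)) 2
          simpa using h2
        · rw [ENNReal.ofReal_one, one_mul, ENNReal.ofReal_zero, zero_mul, add_zero]
          exact hφ.2.1
      · refine hφ.2.2.mono fun x hx hxΩ => ?_
        simp only [hT]
        rw [hx hxΩ, min_eq_left (Nat.cast_nonneg k), max_self]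
    have hT0 : ∀ (k : ℕ) (x : Rn n), 0 ≤ T k x := fun k x => le_max_left _ _
    have hTM : ∀ (k : ℕ) (x : Rn n), T k x ≤ (k:ℝ) := fun k x =>
      max_le (Nat.cast_nonneg k) (min_le_right _ _)
    have hbc : ∀ k, energy n s (fun x => max (u x) (v x)) (T k) ≤ ∫ x : Rn n, T k x := fun k =>
      bounded_case hr0 hΩb hu hv hwL2 hwG (hTDs k) (hT0 k) (hTM k)
    have hTle : ∀ k, (∫ x : Rn n, T k x) ≤ ∫ x : Rn n, φ x := by
      intro k
      refine integral_mono_ae (Ds_integrable hΩb (hTDs k)) (Ds_integrable hΩb hφ) ?_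
      refine hφpos.mono fun x hx => ?_
      simp only [hT]
      exact max_le hx (min_le_left _ _)
    have htendI : Filter.Tendsto (fun k => ∫ p : Rn n × Rn n,
        (max (u p.1) (v p.1) - max (u p.2) (v p.2)) * (T k p.1 - T k p.2) / ker n s p)
        Filter.atTop (nhds (∫ p : Rn n × Rn n,
        (max (u p.1) (v p.1) - max (u p.2) (v p.2)) * (φ p.1 - φ p.2) / ker n s p)) := by
      apply tendsto_integral_of_dominated_convergence
        (bound := fun p : Rn n × Rn n =>
          |(max (u p.1) (v p.1) - max (u p.2) (v p.2)) * (φ p.1 - φ p.2) / ker n s p|)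
      · intro k
        exact (integrable_pair hr hwL2.aestronglyMeasurable (hTsm k) hwG
          (hTDs k).2.1).aestronglyMeasurable
      · exact (integrable_pair hr hwL2.aestronglyMeasurable hφ.1.aestronglyMeasurable hwG
          hφ.2.1).abs
      · intro k
        refine Filter.Eventually.of_forall fun p => ?_
        have hkn := ker_nonneg n s p
        rw [Real.norm_eq_abs, abs_div, abs_div, abs_of_nonneg hkn, abs_mul, abs_mul]
        refine div_le_div_nonneg_denom ?_ hkn
        exact mul_le_mul_of_nonneg_left
          (by simpa [hT] using trunc_contract (φ p.1) (φ p.2) (k:ℝ)) (abs_nonneg _)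
      · refine (ae_pair hφpos hφpos).mono fun p hp => ?_
        obtain ⟨N1, hN1⟩ := exists_nat_ge (φ p.1)
        obtain ⟨N2, hN2⟩ := exists_nat_ge (φ p.2)
        apply tendsto_atTop_of_eventually_const (i₀ := max N1 N2)
        intro k hk
        have hk1 : φ p.1 ≤ (k:ℝ) :=
          le_trans hN1 (Nat.cast_le.mpr (le_trans (le_max_left _ _) hk))
        have hk2 : φ p.2 ≤ (k:ℝ) :=
          le_trans hN2 (Nat.cast_le.mpr (le_trans (le_max_right _ _) hk))
        simp only [hT]
        rw [min_eq_left hk1, min_eq_left hk2, max_eq_right hp.1, max_eq_right hp.2]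
    have hEt : Filter.Tendsto (fun k => energy n s (fun x => max (u x) (v x)) (T k))
        Filter.atTop (nhds (energy n s (fun x => max (u x) (v x)) φ)) :=
      htendI.const_mul (cns n s / 2)
    exact le_of_tendsto hEt (Filter.Eventually.of_forall fun k => le_trans (hbc k) (hTle k))
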